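/- Let d ≥ 2, τ ∈ ℝ, σ, β, ν > 0 and α ∈ (0,1), and write P' := P_Mon,d(σ) ∩ P_Mar,d(τ, β, ν). Then for any n ∈ ℕ, sup over P ∈ P' of the inf over Â ∈ Â_n(τ, α, P') of E_P μ(X_τ(η) \ Â(D)) is at least 1 − α, where μ and η denote the covariate marginal and regression function of P and D ∼ P^n. -/

import Mathlib

open MeasureTheory ProbabilityTheory Real Set
open scoped ENNReal Classical

noncomputable section

/-- `log_+ x := log (x ∨ e)`. -/
def logp (x : ℝ) : ℝ := Real.log (max x (Real.exp 1))

/-- The σ-algebra generated by the covariate `X = Prod.fst`. -/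
def mX (d : ℕ) : MeasurableSpace ((Fin d → ℝ) × ℝ) :=
  MeasurableSpace.comap Prod.fst inferInstance

/-- `η` is (a version of) the regression function `x ↦ E[Y | X = x]` of `P`. -/
def IsRegFn (d : ℕ) (P : Measure ((Fin d → ℝ) × ℝ)) (η : (Fin d → ℝ) → ℝ) : Prop :=
  Measurable η ∧ (fun p => η p.1) =ᵐ[P] P[fun p => p.2 | mX d]

/-- Conditionally on `X`, `Y - η X` is sub-Gaussian with variance parameter `σ²`. -/
def CondSubG (d : ℕ) (σ : ℝ) (P : Measure ((Fin d → ℝ) × ℝ)) (η : (Fin d → ℝ) → ℝ) : Prop :=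
  ∀ t : ℝ, Integrable (fun p => Real.exp (t * (p.2 - η p.1))) P ∧
    (P[fun p => Real.exp (t * (p.2 - η p.1)) | mX d])
      ≤ᵐ[P] fun _ => Real.exp (σ ^ 2 * t ^ 2 / 2)

/-- The class `P_{Mon,d}(σ)`, as a predicate on the pair `(P, η)`. -/
def PMon (d : ℕ) (σ : ℝ) (P : Measure ((Fin d → ℝ) × ℝ)) (η : (Fin d → ℝ) → ℝ) : Prop :=
  IsProbabilityMeasure P ∧ IsRegFn d P η ∧ Monotone η ∧ CondSubG d σ P η

/-- The margin class `P_{Mar,d}(τ, β, ν)`, as a predicate on the pair `(P, η)`. -/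
def PMar (d : ℕ) (τ β ν : ℝ) (P : Measure ((Fin d → ℝ) × ℝ)) (η : (Fin d → ℝ) → ℝ) : Prop :=
  IsProbabilityMeasure P ∧ IsRegFn d P η ∧
    ∀ ξ : ℝ, ξ ∈ Set.Ioc (0 : ℝ) 1 →
      (P.map Prod.fst) (η ⁻¹' Set.Icc τ (τ + ν * ξ ^ β)) ≤ ENNReal.ofReal ξ

/-- Support of a Borel measure: the points all of whose open neighbourhoods have
positive measure. -/
def measSupport {α : Type*} [TopologicalSpace α] [MeasurableSpace α] (μ : Measure α) : Set α :=
  {x | ∀ U : Set α, IsOpen U → x ∈ U → 0 < μ U}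

/-- The regularity class `P_{Reg,d}(τ, θ, γ, λ)`, as a predicate on the pair `(P, η)`. -/
def PReg (d : ℕ) (τ θ γ lam : ℝ) (P : Measure ((Fin d → ℝ) × ℝ)) (η : (Fin d → ℝ) → ℝ) : Prop :=
  IsProbabilityMeasure P ∧ IsRegFn d P η ∧
    ∀ x ∈ {x | τ ≤ η x} ∩ measSupport (P.map Prod.fst), ∀ r : ℝ, r ∈ Set.Ioc (0:ℝ) 1 →
      (ENNReal.ofReal (θ⁻¹ * r ^ d) ≤ (P.map Prod.fst) (Metric.closedBall x r) ∧
        (P.map Prod.fst) (Metric.closedBall x r) ≤ ENNReal.ofReal (θ * (2 * r) ^ d)) ∧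
      (Metric.closedBall x r ∩ {z | τ + lam * r ^ γ ≤ η z}).Nonempty

/-- Indices `i` with `X i ≼ x`, ordered by increasing sup-norm distance to `x`,
ties broken by the original index ordering. -/
def nnOrder {d n : ℕ} (X : Fin n → (Fin d → ℝ)) (x : Fin d → ℝ) : List (Fin n) :=
  List.insertionSort
    (fun i j => ‖X i - x‖ < ‖X j - x‖ ∨ (‖X i - x‖ = ‖X j - x‖ ∧ i ≤ j))
    ((List.finRange n).filter (fun i => decide (X i ≤ x)))

/-- The martingale sums `S_k = ∑_{j=1}^k (Y_{(j)}(x) - τ)/σ`. -/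
def Smart {d n : ℕ} (σ τ : ℝ) (D : Fin n → (Fin d → ℝ) × ℝ) (x : Fin d → ℝ) (k : ℕ) : ℝ :=
  ((((nnOrder (fun i => (D i).1) x).take k).map (fun i => ((D i).2 - τ) / σ)).sum)

/-- The anytime-valid martingale p-value `p̂_{σ,τ}(x, D)`. -/
def phat {d n : ℕ} (σ τ : ℝ) (D : Fin n → (Fin d → ℝ) × ℝ) (x : Fin d → ℝ) : ℝ :=
  ((List.range (nnOrder (fun i => (D i).1) x).length).map (fun k =>
      5.2 * Real.exp (-(max (Smart σ τ D x (k + 1)) 0) ^ 2 / (2.0808 * (k + 1))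
        + Real.log (Real.log (2 * (k + 1))) / 0.72))).foldr min 1

/-- One iteration of the DAG testing procedure `R^ISS`. Edges point from parents to children:
`E a b` means `a` is a parent of `b`; `F` is the weight-one (polyforest) subrelation. -/
def RISSstep {I : Type*} [Fintype I] (E F : I → I → Prop) (α : ℝ) (p : I → ℝ)
    (R : Finset I) : Finset I :=
  let SL : Finset I := Finset.univ.filter (fun i => (∀ j, ¬ F i j) ∧ i ∉ R)
  let SC : Finset I := Finset.univ.filter (fun i => i ∉ R ∧ ∀ j, F j i → j ∈ R)
  let budget : I → ℝ := fun i =>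
    if i ∈ SC then
      ((SL.filter (fun j => j = i ∨ Relation.TransGen F i j)).card : ℝ) * α / (SL.card : ℝ)
    else 0
  let Il : Finset I := Finset.univ.filter (fun i => p i ≤ budget i)
  if Il = ∅ then R
  else R ∪ Il ∪ Finset.univ.filter (fun i => ∃ j ∈ Il, Relation.TransGen E i j)

/-- The DAG testing procedure `R^ISS_α` applied to a polyforest-weighted DAG `(I, E, w)`
(represented by the edge relation `E` and the weight-one subrelation `F`) and p-values `p`. -/
def RISS {I : Type*} [Fintype I] (E F : I → I → Prop) (α : ℝ) (p : I → ℝ) : Finset I :=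
  (RISSstep E F α p)^[Fintype.card I] ∅

/-- Edge relation of the DAG induced by the covariate points `z`. -/
def indE {d m : ℕ} (z : Fin m → (Fin d → ℝ)) (i0 i1 : Fin m) : Prop :=
  i0 ≠ i1 ∧ z i1 ≤ z i0 ∧ ∀ i2, z i1 ≤ z i2 → z i2 ≤ z i0 →
    (z i2 = z i0 ∧ i0 ≤ i2) ∨ (z i2 = z i1 ∧ i2 ≤ i1)

/-- Edge relation of the induced polyforest: among the induced-DAG parents of `i1`, keep the one
of minimal sup-norm distance to `z i1`, ties broken by smallest index. -/
def indF {d m : ℕ} (z : Fin m → (Fin d → ℝ)) (i0 i1 : Fin m) : Prop :=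
  indE z i0 i1 ∧ ∀ i, indE z i i1 →
    (‖z i0 - z i1‖ < ‖z i - z i1‖ ∨ (‖z i0 - z i1‖ = ‖z i - z i1‖ ∧ i0 ≤ i))

/-- The selection set `Â^{ISS}_{σ,τ,α,m}(D)`: the upper hull of the covariate points (among the
first `m` data points) whose hypotheses are rejected by `R^ISS` applied to the induced
polyforest-weighted DAG of `(X_1, …, X_m)` and the martingale p-values `p̂_{σ,τ}(X_i, D)`. -/
def AISS {d n : ℕ} (σ τ α : ℝ) (m : ℕ) (hm : m ≤ n)
    (D : Fin n → (Fin d → ℝ) × ℝ) : Set (Fin d → ℝ) :=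
  let z : Fin m → (Fin d → ℝ) := fun i => (D (Fin.castLE hm i)).1
  {x | ∃ i ∈ RISS (indE z) (indF z) α (fun i => phat σ τ D (z i)), z i ≤ x}

/-- `A` is a valid data-dependent selection set at level `α` for the class `PC`:
it is jointly measurable and satisfies the Type I error guarantee over `PC`. -/
def SelValid (d n : ℕ) (τ α : ℝ)
    (PC : Measure ((Fin d → ℝ) × ℝ) → ((Fin d → ℝ) → ℝ) → Prop)
    (A : (Fin n → (Fin d → ℝ) × ℝ) → Set (Fin d → ℝ)) : Prop :=
  MeasurableSet {q : (Fin n → (Fin d → ℝ) × ℝ) × (Fin d → ℝ) | q.2 ∈ A q.1} ∧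
  ∀ P η, PC P η →
    ENNReal.ofReal (1 - α) ≤ (Measure.pi fun _ : Fin n => P) {ω | A ω ⊆ {x | τ ≤ η x}}

end

noncomputable section AuxProof

/-- The antichain embedding `t ↦ (t, -t, 0, …, 0)`. -/
def emb (d : ℕ) (t : ℝ) : Fin d → ℝ :=
  fun i => if (i : ℕ) = 0 then t else if (i : ℕ) = 1 then -t else 0

lemma emb_measurable (d : ℕ) : Measurable (emb d) := by
  apply measurable_pi_lambda
  intro i
  unfold emb
  split_ifs
  · exact measurable_id
  · exact measurable_neg
  · exact measurable_const

lemma emb_le_emb {d : ℕ} (hd : 2 ≤ d) {s t : ℝ} : emb d s ≤ emb d t ↔ s = t := by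
  constructor
  · intro h
    have h0 := h ⟨0, by omega⟩
    have h1 := h ⟨1, by omega⟩
    simp [emb] at h0 h1
    linarith
  · rintro rfl; exact le_refl _

/-- The hard distribution: `X = emb d T` with `T` uniform on `[0,1]`, `Y = τ + ν + 1`. -/
def PP (d : ℕ) (y₀ : ℝ) : Measure ((Fin d → ℝ) × ℝ) :=
  Measure.map (fun t => (emb d t, y₀)) (volume.restrict (Set.Icc (0:ℝ) 1))

lemma mem_class (d : ℕ) (τ σ β ν : ℝ) (hβ : 0 < β) (hν : 0 < ν)
    (η : (Fin d → ℝ) → ℝ) (hmeas : Measurable η) (hmono : Monotone η)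
    (hrange : ∀ x, η x = τ - 1 ∨ η x = τ + ν + 1)
    (hae : ∀ᵐ t ∂(volume.restrict (Set.Icc (0:ℝ) 1)), η (emb d t) = τ + ν + 1) :
    PMon d σ (PP d (τ+ν+1)) η ∧ PMar d τ β ν (PP d (τ+ν+1)) η := by
  set κ : Measure ℝ := volume.restrict (Set.Icc (0:ℝ) 1) with hκ
  haveI : IsProbabilityMeasure κ := ⟨by rw [hκ, Measure.restrict_apply_univ, Real.volume_Icc]; norm_num⟩
  have hg : Measurable (fun t => (emb d t, τ+ν+1) : ℝ → (Fin d → ℝ) × ℝ) :=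
    (emb_measurable d).prodMk measurable_const
  haveI hPprob : IsProbabilityMeasure (PP d (τ+ν+1)) :=
    Measure.isProbabilityMeasure_map hg.aemeasurable
  set P := PP d (τ+ν+1) with hP
  have hm : mX d ≤ (inferInstance : MeasurableSpace ((Fin d → ℝ) × ℝ)) :=
    Measurable.comap_le measurable_fst
  -- `η (fst p) = τ+ν+1` almost surely.
  have hPae : (fun p : (Fin d → ℝ) × ℝ => η p.1) =ᵐ[P] fun _ => τ + ν + 1 := by
    rw [hP, PP, Filter.EventuallyEq, ae_map_iff hg.aemeasurable]
    · exact hae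
    · exact (hmeas.comp measurable_fst) (measurableSet_singleton (τ+ν+1))
  -- `snd = τ+ν+1` almost surely.
  have hsnd : (fun p : (Fin d → ℝ) × ℝ => p.2) =ᵐ[P] fun _ => τ + ν + 1 := by
    rw [hP, PP, Filter.EventuallyEq, ae_map_iff hg.aemeasurable]
    · exact Filter.Eventually.of_forall fun t => rfl
    · exact measurable_snd (measurableSet_singleton (τ+ν+1))
  have hreg : IsRegFn d P η := by
    refine ⟨hmeas, ?_⟩
    have h1 : P[fun p : (Fin d → ℝ) × ℝ => p.2 | mX d] =ᵐ[P] fun _ => τ + ν + 1 := by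
      refine (condExp_congr_ae hsnd).trans ?_
      rw [condExp_const hm]
    exact hPae.trans h1.symm
  have hsub : CondSubG d σ P η := by
    intro r
    have hone : (fun p : (Fin d → ℝ) × ℝ => Real.exp (r * (p.2 - η p.1)))
        =ᵐ[P] fun _ => (1 : ℝ) := by
      filter_upwards [hPae, hsnd] with p h1 h2
      rw [h1, h2]; simp
    refine ⟨(integrable_const (1:ℝ)).congr hone.symm, ?_⟩
    have h2 : P[fun p : (Fin d → ℝ) × ℝ => Real.exp (r * (p.2 - η p.1)) | mX d]
        =ᵐ[P] fun _ => (1 : ℝ) := by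
      refine (condExp_congr_ae hone).trans ?_
      rw [condExp_const hm]
    filter_upwards [h2] with p hp
    rw [hp]
    exact Real.one_le_exp (by positivity)
  have hmargin : ∀ ξ : ℝ, ξ ∈ Set.Ioc (0:ℝ) 1 →
      (P.map Prod.fst) (η ⁻¹' Set.Icc τ (τ + ν * ξ ^ β)) ≤ ENNReal.ofReal ξ := by
    intro ξ hξ
    have hempty : η ⁻¹' Set.Icc τ (τ + ν * ξ ^ β) = ∅ := by
      ext x
      simp only [Set.mem_preimage, Set.mem_Icc, Set.mem_empty_iff_false, iff_false, not_and]
      intro h1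
      have hle : ξ ^ β ≤ 1 := Real.rpow_le_one hξ.1.le hξ.2 hβ.le
      rcases hrange x with h | h
      · linarith
      · rw [h]
        have : ν * ξ ^ β ≤ ν * 1 := by
          exact mul_le_mul_of_nonneg_left hle hν.le
        intro hc; linarith
    rw [hempty]
    simp
  exact ⟨⟨hPprob, hreg, hmono, hsub⟩, hPprob, hreg, hmargin⟩

end AuxProof

/-- Proposition 1: for `d ≥ 2`, even over `P' = P_{Mon,d}(σ) ∩ P_{Mar,d}(τ,β,ν)`, no
data-dependent selection set with Type I error control can have worst-case expected regret
smaller than `1 - α`. -/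
theorem statement9 (d : ℕ) (hd : 2 ≤ d) (τ σ β ν : ℝ) (hσ : 0 < σ) (hβ : 0 < β) (hν : 0 < ν)
    (α : ℝ) (hα : α ∈ Set.Ioo (0 : ℝ) 1) (n : ℕ) (hn : 0 < n) :
    ENNReal.ofReal (1 - α) ≤
      ⨆ (P : Measure ((Fin d → ℝ) × ℝ)) (η : (Fin d → ℝ) → ℝ)
          (_ : PMon d σ P η ∧ PMar d τ β ν P η),
        ⨅ (A : (Fin n → (Fin d → ℝ) × ℝ) → Set (Fin d → ℝ))
            (_ : SelValid d n τ α (fun P' η' => PMon d σ P' η' ∧ PMar d τ β ν P' η') A),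
          ∫⁻ ω, (P.map Prod.fst) ({x | τ ≤ η x} \ A ω)
            ∂(Measure.pi fun _ : Fin n => P) := by
  classical
  set κ : Measure ℝ := volume.restrict (Set.Icc (0:ℝ) 1) with hκ
  haveI : IsProbabilityMeasure κ :=
    ⟨by rw [hκ, Measure.restrict_apply_univ, Real.volume_Icc]; norm_num⟩
  set y₀ : ℝ := τ + ν + 1 with hy₀
  set P : Measure ((Fin d → ℝ) × ℝ) := PP d y₀ with hPdef
  have hclass0 := mem_class d τ σ β ν hβ hν (fun _ => y₀) measurable_const monotone_const
    (fun _ => Or.inr rfl) (Filter.Eventually.of_forall fun _ => rfl)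
  haveI hPprob : IsProbabilityMeasure P := hclass0.1.1
  apply le_iSup_of_le P
  apply le_iSup_of_le (fun _ => y₀)
  apply le_iSup_of_le hclass0
  refine le_iInf fun A => le_iInf fun hA => ?_
  set Pn : Measure (Fin n → (Fin d → ℝ) × ℝ) := Measure.pi fun _ : Fin n => P with hPn
  haveI : IsProbabilityMeasure Pn := by
    rw [hPn]; infer_instance
  have : SigmaFinite Pn := IsFiniteMeasure.toSigmaFinite Pn
  obtain ⟨hSmeas, hvalid⟩ := hA
  set S : Set ((Fin n → (Fin d → ℝ) × ℝ) × (Fin d → ℝ)) :=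
    {q | q.2 ∈ A q.1} with hSdef
  -- the superlevel set of the constant regression function is everything
  have hsl : {x : Fin d → ℝ | τ ≤ (fun _ => y₀) x} = Set.univ := by
    ext x; simp only [Set.mem_setOf_eq, Set.mem_univ, iff_true, hy₀]; linarith
  -- the marginal of P
  have hμ : P.map Prod.fst = Measure.map (emb d) κ := by
    rw [hPdef, PP, Measure.map_map measurable_fst
      ((emb_measurable d).prodMk measurable_const)]
    rfl
  -- key per-point bound coming from validity against the alternative regression functions
  have key : ∀ t : ℝ, ENNReal.ofReal (1 - α) ≤ Pn ((fun ω => (ω, emb d t)) ⁻¹' Sᶜ) := by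
    intro t
    set ηt : (Fin d → ℝ) → ℝ := fun x => if x ≤ emb d t then τ - 1 else y₀ with hηt
    have hsetm : MeasurableSet {x : Fin d → ℝ | x ≤ emb d t} := by
      have : {x : Fin d → ℝ | x ≤ emb d t} = ⋂ i, (fun x : Fin d → ℝ => x i) ⁻¹'
          Set.Iic (emb d t i) := by
        ext x; simp [Pi.le_def]
      rw [this]
      exact MeasurableSet.iInter fun i => (measurable_pi_apply i) measurableSet_Iic
    have hmeasηt : Measurable ηt :=
      Measurable.ite hsetm measurable_const measurable_const
    have hmonot : Monotone ηt := by
      intro a b hab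
      rw [hηt]
      dsimp only
      split_ifs with h1 h2 h2
      · exact le_refl _
      · rw [hy₀]; linarith only [hν]
      · exact absurd (hab.trans h2) h1
      · exact le_refl _
    have hranget : ∀ x, ηt x = τ - 1 ∨ ηt x = τ + ν + 1 := by
      intro x
      rw [hηt]; dsimp only
      split_ifs
      · exact Or.inl rfl
      · exact Or.inr hy₀
    have haet : ∀ᵐ s ∂κ, ηt (emb d s) = τ + ν + 1 := by
      rw [ae_iff]
      refine measure_mono_null (t := {t}) ?_ ?_
      · intro s hs
        simp only [Set.mem_setOf_eq] at hs
        simp only [Set.mem_singleton_iff]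
        by_contra hne
        have : ¬ emb d s ≤ emb d t := fun hle => hne ((emb_le_emb hd).mp hle)
        exact hs (by rw [hηt]; simp only [if_neg this, hy₀])
      · rw [hκ, Measure.restrict_apply (measurableSet_singleton t)]
        exact measure_mono_null Set.inter_subset_left Real.volume_singleton
    have hclasst := mem_class d τ σ β ν hβ hν ηt hmeasηt hmonot hranget haet
    have hv := hvalid P ηt (by rw [hPdef, hy₀]; exact hclasst)
    refine hv.trans (measure_mono ?_)
    intro ω hω
    simp only [Set.mem_setOf_eq] at hω
    simp only [Set.mem_preimage, Set.mem_compl_iff, hSdef, Set.mem_setOf_eq]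
    intro hmemS
    have hτ : τ ≤ ηt (emb d t) := hω hmemS
    rw [hηt] at hτ
    simp only [if_pos (le_refl (emb d t))] at hτ
    linarith
  -- now assemble, using Tonelli on the product measure
  have hgmeas : Measurable fun x : Fin d → ℝ => Pn ((fun ω => (ω, x)) ⁻¹' Sᶜ) :=
    measurable_measure_prodMk_right hSmeas.compl
  calc ENNReal.ofReal (1 - α)
      = ∫⁻ _, ENNReal.ofReal (1 - α) ∂κ := by
        rw [lintegral_const, measure_univ, mul_one]
    _ ≤ ∫⁻ t, Pn ((fun ω => (ω, emb d t)) ⁻¹' Sᶜ) ∂κ := lintegral_mono fun t => key t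
    _ = ∫⁻ x, Pn ((fun ω => (ω, x)) ⁻¹' Sᶜ) ∂(P.map Prod.fst) := by
        rw [hμ, lintegral_map hgmeas (emb_measurable d)]
    _ = (Pn.prod (P.map Prod.fst)) Sᶜ := (Measure.prod_apply_symm hSmeas.compl).symm
    _ = ∫⁻ ω, (P.map Prod.fst) (Prod.mk ω ⁻¹' Sᶜ) ∂Pn := Measure.prod_apply hSmeas.compl
    _ = ∫⁻ ω, (P.map Prod.fst) ({x | τ ≤ (fun _ => y₀) x} \ A ω) ∂Pn := by
        refine lintegral_congr fun ω => ?_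
        congr 1
        rw [hsl]
        ext x
        simp [hSdef, Set.mem_diff]
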